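/- Let Δ be an R-module such that: (i) for every x ∈ Δ and every d ∈ D there exists N ≥ 0 with t_d^N·x = 0; and (ii) Δ[t_•] := {x ∈ Δ : t_d·x = 0 for all d ∈ D} is a finite-dimensional k-vector space. Then the dual Δ* = Hom_k(Δ, k), regarded as an R-module via (a·ℓ)(x) = ℓ(a·x), is a finitely generated R-module. -/

import Mathlib

noncomputable section

variable (k : Type*) [Field k] (D : Type*) [Fintype D]
variable (Δ : Type*) [AddCommGroup Δ] [Module k Δ] [Module (MvPowerSeries D k) Δ]
variable [IsScalarTower k (MvPowerSeries D k) Δ]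

/-- `Δ[t_•] = {x ∈ Δ : t_d·x = 0 for all d ∈ D}`, as a `k`-subspace of `Δ`. -/
def torsionAll : Submodule k Δ where
  carrier := {x | ∀ d : D, (MvPowerSeries.X d : MvPowerSeries D k) • x = 0}
  add_mem' := by
    intro a b ha hb d
    rw [smul_add, ha d, hb d, add_zero]
  zero_mem' := fun d => smul_zero _
  smul_mem' := by
    intro c x hx d
    rw [← algebraMap_smul (MvPowerSeries D k) c x, smul_smul, mul_comm, ← smul_smul,
      hx d, smul_zero]

/-- The `k[[t_•]]`-module structure on the `k`-linear dual of a `k[[t_•]]`-module `Δ`,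
given by `(a·ℓ)(x) = ℓ(a·x)`. -/
def dualModule : Module (MvPowerSeries D k) (Δ →ₗ[k] k) where
  smul a ℓ :=
    { toFun := fun x => ℓ (a • x)
      map_add' := fun x y => by
        show ℓ (a • (x + y)) = ℓ (a • x) + ℓ (a • y)
        rw [smul_add, map_add]
      map_smul' := fun c x => by
        show ℓ (a • (c • x)) = c • ℓ (a • x)
        rw [← algebraMap_smul (MvPowerSeries D k) c x, smul_smul, mul_comm, ← smul_smul,
          algebraMap_smul, map_smul] }
  one_smul ℓ := by ext x; show ℓ ((1 : MvPowerSeries D k) • x) = ℓ x; rw [one_smul]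
  mul_smul a b ℓ := by
    ext x
    show ℓ ((a * b) • x) = ℓ (b • (a • x))
    rw [← smul_smul, smul_comm]
  smul_zero a := by ext x; rfl
  smul_add a ℓ₁ ℓ₂ := by ext x; rfl
  add_smul a b ℓ := by
    ext x
    show ℓ ((a + b) • x) = ℓ (a • x) + ℓ (b • x)
    rw [add_smul, map_add]
  zero_smul ℓ := by
    ext x
    show ℓ ((0 : MvPowerSeries D k) • x) = 0
    rw [zero_smul, map_zero]


open MvPowerSeries

variable {k D Δ}

set_option linter.unusedSectionVars false

namespace St12

local notation "R" => MvPowerSeries D k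

theorem smul_comm_k (a : R) (c : k) (x : Δ) : a • (c • x) = c • (a • x) := by
  rw [← algebraMap_smul (MvPowerSeries D k) c x, smul_smul, mul_comm, ← smul_smul,
    algebraMap_smul]

/-- the action of `a : R` on `Δ` as a `k`-linear map. -/
def actL (a : R) : Δ →ₗ[k] Δ where
  toFun := (a • ·)
  map_add' := smul_add a
  map_smul' c x := smul_comm_k a c x

@[simp] theorem actL_apply (a : R) (x : Δ) : actL a x = a • x := rfl

variable (k D Δ)

/-- `S n = {x : X_d^n • x = 0 for all d}`. -/
def Ssub (n : ℕ) : Submodule k Δ where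
  carrier := {x | ∀ d : D, ((X d : R)) ^ n • x = 0}
  add_mem' := by intro a b ha hb d; rw [smul_add, ha d, hb d, add_zero]
  zero_mem' := fun d => smul_zero _
  smul_mem' := by intro c x hx d; rw [smul_comm_k, hx d, smul_zero]

variable {k D Δ}

theorem mem_Ssub {n : ℕ} {x : Δ} : x ∈ Ssub k D Δ n ↔
    ∀ d : D, ((X d : R)) ^ n • x = 0 := Iff.rfl

theorem pow_smul_zero_of_le {d : D} {n m : ℕ} {x : Δ} (h : ((X d : R)) ^ n • x = 0)
    (hnm : n ≤ m) : ((X d : R)) ^ m • x = 0 := by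
  rw [← Nat.sub_add_cancel hnm, pow_add, mul_smul, h, smul_zero]

/-- The monomial `∏ X_d ^ ν d`. -/
def Xp (ν : D → ℕ) : R := ∏ d, (X d : R) ^ ν d

theorem Xp_smul_zero {ν : D → ℕ} {d : D} {n : ℕ} {x : Δ} (h : ((X d : R)) ^ n • x = 0)
    (hn : n ≤ ν d) : (Xp ν : R) • x = 0 := by
  classical
  rw [Xp, ← Finset.prod_erase_mul _ _ (Finset.mem_univ d), mul_smul,
    pow_smul_zero_of_le h hn, smul_zero]

theorem Xp_update [DecidableEq D] (ν : D → ℕ) (e : D) (m : ℕ) :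
    (Xp (Function.update ν e m) : R)
      = (X e : R) ^ m * ∏ d ∈ Finset.univ.erase e, (X d : R) ^ ν d := by
  rw [Xp, ← Finset.mul_prod_erase _ _ (Finset.mem_univ e), Function.update_self]
  congr 1
  exact Finset.prod_congr rfl fun d hd => by
    rw [Function.update_of_ne (Finset.ne_of_mem_erase hd)]

theorem X_mul_Xp [DecidableEq D] (ν : D → ℕ) (e : D) :
    (Xp (Function.update ν e (ν e + 1)) : R) = (X e : R) * Xp ν := by
  rw [Xp_update, pow_succ, mul_comm ((X e : R) ^ ν e) (X e), mul_assoc, Xp,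
    ← Finset.mul_prod_erase _ _ (Finset.mem_univ e)]

theorem Xp_update_pow [DecidableEq D] (ν : D → ℕ) (d : D) (hd : ν d = 0) (m : ℕ) :
    (Xp (Function.update ν d m) : R) = (X d : R) ^ m * Xp ν := by
  rw [Xp_update, Xp, ← Finset.mul_prod_erase _ _ (Finset.mem_univ d), hd, pow_zero, one_mul]


/-- the exponent of `Xp ν` as a finsupp -/
def expF (ν : D → ℕ) : D →₀ ℕ := Finsupp.equivFunOnFinite.symm ν

@[simp] theorem expF_apply (ν : D → ℕ) (d : D) : expF ν d = ν d := rfl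

theorem monomial_prod (s : Finset D) (φ : D → (D →₀ ℕ)) :
    (∏ d ∈ s, (monomial (φ d) 1 : R)) = monomial (∑ d ∈ s, φ d) 1 := by
  classical
  induction s using Finset.induction with
  | empty => simp [monomial_zero_one]
  | insert _ _ h ih =>
      rw [Finset.prod_insert h, Finset.sum_insert h, ih, monomial_mul_monomial, one_mul]

theorem Xp_eq_monomial (ν : D → ℕ) : (Xp ν : R) = monomial (expF ν) 1 := by
  rw [Xp]
  have : ∀ d : D, (X d : R) ^ ν d = monomial (Finsupp.single d (ν d)) 1 :=
    fun d => X_pow_eq d (ν d)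
  rw [Finset.prod_congr rfl fun d _ => this d, monomial_prod]
  have he : (∑ d : D, Finsupp.single d (ν d)) = expF ν := by
    ext e
    rw [Finsupp.finset_sum_apply]
    classical
    rw [Finset.sum_congr rfl fun i _ => Finsupp.single_apply (a := i) (b := ν i) (a' := e)]
    rw [Finset.sum_ite_eq' Finset.univ e ν, if_pos (Finset.mem_univ e)]
    rfl
  rw [he]

theorem coeff_Xp_ne_zero {ν : D → ℕ} {γ : D →₀ ℕ} (h : coeff γ (Xp ν : R) ≠ 0) :
    ∀ d, γ d = ν d := by
  classical
  rw [Xp_eq_monomial, coeff_monomial] at h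
  intro d
  by_cases hγ : γ = expF ν
  · rw [hγ]; rfl
  · exact absurd (if_neg hγ) h

/-- every `x` lies in some `Ssub n` -/
theorem exists_mem_Ssub
    (h1 : ∀ (x : Δ) (d : D), ∃ N : ℕ, ((X d : R)) ^ N • x = 0) (x : Δ) :
    ∃ n : ℕ, x ∈ Ssub k D Δ n := by
  classical
  refine ⟨Finset.univ.sup fun d => (h1 x d).choose, fun d => ?_⟩
  exact pow_smul_zero_of_le (h1 x d).choose_spec
    (Finset.le_sup (f := fun d => (h1 x d).choose) (Finset.mem_univ d))

/-- If all coefficients of `f` live in degrees `γ` with some `γ d ≥ n`, then `f` kills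
`Ssub n`. -/
theorem smul_eq_zero_of_support [Nonempty D] {n : ℕ} {f : R}
    (hf : ∀ γ : D →₀ ℕ, coeff γ f ≠ 0 → ∃ d, n ≤ γ d) {x : Δ}
    (hx : x ∈ Ssub k D Δ n) : f • x = 0 := by
  classical
  set pick : (D →₀ ℕ) → D := fun γ =>
    if h : ∃ d, n ≤ γ d then h.choose else Classical.arbitrary D with hpick
  set h : D → R := fun d =>
    (fun β : D →₀ ℕ => if pick (β + Finsupp.single d n) = d
      then coeff (β + Finsupp.single d n) f else 0 : (D →₀ ℕ) → k) with hh
  have hcoeffh : ∀ d β, coeff β (h d)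
      = if pick (β + Finsupp.single d n) = d then coeff (β + Finsupp.single d n) f else 0 :=
    fun d β => rfl
  have hdecomp : f = ∑ d, (X d : R) ^ n * h d := by
    apply MvPowerSeries.ext
    intro γ
    rw [map_sum]
    have hterm : ∀ d : D, coeff γ ((X d : R) ^ n * h d)
        = if Finsupp.single d n ≤ γ ∧ pick γ = d then coeff γ f else 0 := by
      intro d
      rw [X_pow_eq, coeff_monomial_mul]
      by_cases hle : Finsupp.single d n ≤ γ
      · rw [if_pos hle, one_mul, hcoeffh, tsub_add_cancel_of_le hle]
        by_cases hp : pick γ = d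
        · rw [if_pos hp, if_pos ⟨hle, hp⟩]
        · rw [if_neg hp, if_neg (fun hc => hp hc.2)]
      · rw [if_neg hle, if_neg (fun hc => hle hc.1)]
    rw [Finset.sum_congr rfl fun d _ => hterm d]
    by_cases h0 : coeff γ f = 0
    · rw [h0]
      exact (Finset.sum_eq_zero fun d _ => ite_self 0).symm
    · obtain ⟨d0, hd0⟩ := hf γ h0
      have hex : ∃ d, n ≤ γ d := ⟨d0, hd0⟩
      have hple : Finsupp.single (pick γ) n ≤ γ := by
        rw [Finsupp.single_le_iff]
        rw [hpick]
        simp only [dif_pos hex]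
        exact hex.choose_spec
      rw [Finset.sum_eq_single (pick γ) (fun d _ hd => if_neg fun hc => hd hc.2.symm)
        (fun hd => absurd (Finset.mem_univ _) hd)]
      rw [if_pos ⟨hple, rfl⟩]
  rw [hdecomp, Finset.sum_smul]
  refine Finset.sum_eq_zero fun d _ => ?_
  rw [mul_comm, mul_smul, hx d, smul_zero]

/-- detection: if all pairings of `x ∈ S_{n+1}` against the separating functionals,
through monomials of degree profile between `n` and `n+1`, vanish, then `x ∈ S_n`. -/
theorem detect [Nonempty D] {r : ℕ} {g : Fin r → (Δ →ₗ[k] k)}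
    (hg : ∀ z ∈ torsionAll k D Δ, (∀ i, g i z = 0) → z = 0)
    {n : ℕ} {x : Δ} (hx : x ∈ Ssub k D Δ (n+1))
    (H : ∀ (i : Fin r) (ν : D → ℕ), (∀ d, ν d ≤ n+1) → (∃ d, n ≤ ν d) →
      g i ((Xp ν : R) • x) = 0) :
    x ∈ Ssub k D Δ n := by
  classical
  intro d
  by_contra hy0
  set y : Δ := ((X d : R)) ^ n • x with hy
  have hsm : ∀ (a b : R) (w : Δ), a • b • w = b • a • w := by
    intro a b w; rw [← mul_smul, mul_comm, mul_smul]
  have hyS : ∀ e : D, ((X e : R)) ^ (n+1) • y = 0 := by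
    intro e; rw [hy, hsm, hx e, smul_zero]
  have hdy : (X d : R) • y = 0 := by
    rw [hy, ← mul_smul, ← pow_succ', hx d]
  set P : ℕ → Prop := fun s =>
    ∃ β : D → ℕ, (∀ e, β e ≤ n+1) ∧ (∑ e, β e) = s ∧ (Xp β : R) • y ≠ 0 with hP
  have hP0 : P 0 := by
    refine ⟨fun _ => 0, fun e => Nat.zero_le _, by simp, ?_⟩
    have : (Xp (fun _ => (0:ℕ)) : R) = 1 := by simp [Xp]
    rw [this, one_smul]; exact hy0
  set B := (n+1) * Fintype.card D with hB
  obtain ⟨β, hβle, hβsum, hβne⟩ := Nat.findGreatest_spec (Nat.zero_le B) hP0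
  have hstep : ∀ e : D, (Xp (Function.update β e (β e + 1)) : R) • y = 0 := by
    intro e
    by_cases hbe : n ≤ β e
    · exact Xp_smul_zero (hyS e) (by rw [Function.update_self]; omega)
    · push_neg at hbe
      have hcoord : ∀ e', Function.update β e (β e + 1) e' ≤ n+1 := by
        intro e'
        rcases eq_or_ne e' e with rfl | hne
        · rw [Function.update_self]; omega
        · rw [Function.update_of_ne hne]; exact hβle e'
      have h1' := Finset.sum_update_of_mem (Finset.mem_univ e) β (β e + 1)
      rw [Finset.sdiff_singleton_eq_erase] at h1'
      have h2' := Finset.sum_erase_add Finset.univ β (Finset.mem_univ e)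
      by_cases hBle : (∑ e', β e') + 1 ≤ B
      · by_contra hne0
        refine Nat.findGreatest_is_greatest (P := P) (by omega) hBle ?_
        exact ⟨_, hcoord, by omega, hne0⟩
      · exfalso
        have hlt : (∑ e', β e') < ∑ _e' : D, (n+1) :=
          Finset.sum_lt_sum (fun i _ => hβle i) ⟨e, Finset.mem_univ e, by omega⟩
        rw [Finset.sum_const, Finset.card_univ, smul_eq_mul, mul_comm] at hlt
        have := Nat.findGreatest_le (P := P) B
        omega
  have hβd : β d = 0 := by
    by_contra h0
    exact hβne (Xp_smul_zero (n := 1) (by rw [pow_one]; exact hdy) (by omega))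
  have hXpν : (Xp (Function.update β d n) : R) = (X d : R) ^ n * Xp β :=
    Xp_update_pow β d hβd n
  have hz : (Xp (Function.update β d n) : R) • x = (Xp β : R) • y := by
    rw [hXpν, mul_comm, mul_smul]
  have hzt : (Xp β : R) • y ∈ torsionAll k D Δ := by
    intro e
    rw [← mul_smul, ← X_mul_Xp β e, hstep e]
  refine hβne (hg _ hzt fun i => ?_)
  rw [← hz]
  refine H i _ (fun e => ?_) ⟨d, by rw [Function.update_self]⟩
  rcases eq_or_ne e d with rfl | hne
  · rw [Function.update_self]; omega
  · rw [Function.update_of_ne hne]; exact hβle e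


/-- key approximation step -/
theorem key [Nonempty D] {r : ℕ} {g : Fin r → (Δ →ₗ[k] k)}
    (hg : ∀ z ∈ torsionAll k D Δ, (∀ i, g i z = 0) → z = 0)
    (n : ℕ) (ℓ : Δ →ₗ[k] k) (hℓ : ∀ x ∈ Ssub k D Δ n, ℓ x = 0) :
    ∃ c : Fin r → R, (∀ i γ, coeff γ (c i) ≠ 0 → ∃ d : D, n ≤ γ d) ∧
      ∀ x ∈ Ssub k D Δ (n+1), ℓ x = ∑ i, g i ((c i) • x) := by
  classical
  set W := Ssub k D Δ (n+1) with hW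
  set v : (Fin r × (D → Fin (n+2))) → Module.Dual k W := fun p =>
    if ∃ d, n ≤ (p.2 d : ℕ) then
      ((g p.1).comp ((actL (Xp fun d => (p.2 d : ℕ))).comp W.subtype)) else 0 with hv
  set U : Submodule k (Module.Dual k W) := Submodule.span k (Set.range v) with hU
  haveI : FiniteDimensional k U := FiniteDimensional.span_of_finite k (Set.finite_range v)
  have hcoann : ∀ w : W, w ∈ U.dualCoannihilator → (w : Δ) ∈ Ssub k D Δ n := by
    intro w hw
    rw [Submodule.mem_dualCoannihilator] at hw
    refine detect hg w.2 fun i ν hν1 hν2 => ?_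
    set α : D → Fin (n+2) := fun d => ⟨ν d, by have := hν1 d; omega⟩ with hα
    have hveq : v (i, α) = (g i).comp ((actL (Xp ν)).comp W.subtype) := by
      rw [hv]
      simp only
      rw [if_pos hν2]
    have := hw (v (i, α)) (Submodule.subset_span ⟨(i, α), rfl⟩)
    rw [hveq] at this
    exact this
  have hmem : ℓ.comp W.subtype ∈ U := by
    rw [← Subspace.dualCoannihilator_dualAnnihilator_eq (W := U),
      Submodule.mem_dualAnnihilator]
    intro w hw
    exact hℓ _ (hcoann w hw)
  obtain ⟨cc, hcc⟩ := (Submodule.mem_span_range_iff_exists_fun k).mp hmem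
  refine ⟨fun i => ∑ α : D → Fin (n+2),
      if ∃ d, n ≤ (α d : ℕ) then cc (i, α) • (Xp fun d => (α d : ℕ) : R) else 0, ?_, ?_⟩
  · intro i γ hγ
    rw [map_sum] at hγ
    obtain ⟨α, -, hα⟩ := Finset.exists_ne_zero_of_sum_ne_zero hγ
    by_cases hcond : ∃ d, n ≤ (α d : ℕ)
    · rw [if_pos hcond, map_smul, smul_eq_mul] at hα
      obtain ⟨d, hd⟩ := hcond
      have hXne : coeff γ (Xp fun d => (α d : ℕ) : R) ≠ 0 :=
        fun h => hα (by rw [h, mul_zero])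
      exact ⟨d, by rw [coeff_Xp_ne_zero hXne d]; exact hd⟩
    · rw [if_neg hcond, map_zero] at hα
      exact absurd rfl hα
  · intro x hx
    have h1 : ℓ x = (∑ j, cc j • v j) ⟨x, hx⟩ := by rw [hcc]; rfl
    rw [h1, LinearMap.sum_apply, Fintype.sum_prod_type]
    refine Finset.sum_congr rfl fun i _ => ?_
    rw [Finset.sum_smul, map_sum]
    refine Finset.sum_congr rfl fun α _ => ?_
    by_cases hcond : ∃ d, n ≤ (α d : ℕ)
    · rw [if_pos hcond]
      have hveq : v (i, α) = (g i).comp ((actL (Xp fun d => (α d : ℕ))).comp W.subtype) := by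
        rw [hv]; simp only; rw [if_pos hcond]
      rw [hveq, smul_assoc, map_smul, LinearMap.smul_apply]
      rfl
    · rw [if_neg hcond]
      have hveq : v (i, α) = 0 := by rw [hv]; simp only; rw [if_neg hcond]
      rw [hveq, zero_smul, map_zero, smul_zero]
      exact rfl


end St12

variable (k D Δ)

/-- **Statement 12.**  Let `k` be a finite field and `R = k[[t_•]]`.  If an `R`-module
`Δ` is torsion in each variable and `Δ[t_•]` is a finite-dimensional `k`-vector space
(i.e. `Δ` is admissible), then the dual `Δ* = Hom_k(Δ, k)`, with the `R`-action
`(a·ℓ)(x) = ℓ(a·x)`, is a finitely generated `R`-module. -/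
theorem statement12 [Finite k] [Nonempty D]
    (h1 : ∀ (x : Δ) (d : D), ∃ N : ℕ,
      ((MvPowerSeries.X d : MvPowerSeries D k) ^ N) • x = 0)
    (h2 : FiniteDimensional k (torsionAll k D Δ)) :
    @Module.Finite (MvPowerSeries D k) (Δ →ₗ[k] k) _ _ (dualModule k D Δ) := by
  classical
  letI : Module (MvPowerSeries D k) (Δ →ₗ[k] k) := dualModule k D Δ
  haveI := h2
  -- separating functionals extending the coordinate functionals of a basis of the socle
  set b := Module.finBasis k (torsionAll k D Δ) with hb
  set r := Module.finrank k (torsionAll k D Δ) with hr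
  choose g hgext using fun i : Fin r => LinearMap.exists_extend (V' := k) (b.coord i)
  have hg : ∀ z ∈ torsionAll k D Δ, (∀ i, g i z = 0) → z = 0 := by
    intro z hz h0
    have hz0 : (⟨z, hz⟩ : torsionAll k D Δ) = 0 := by
      rw [← b.forall_coord_eq_zero_iff]
      intro i
      have := LinearMap.congr_fun (hgext i) ⟨z, hz⟩
      rw [LinearMap.comp_apply] at this
      rw [← this]
      exact h0 i
    exact congrArg Subtype.val hz0
  -- iterate the key approximation step
  choose cf hc1 hc2 using fun (n : ℕ) (ℓ' : Δ →ₗ[k] k)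
    (h : ∀ x ∈ St12.Ssub k D Δ n, ℓ' x = 0) => St12.key hg n ℓ' h
  suffices hspan : (⊤ : Submodule (MvPowerSeries D k) (Δ →ₗ[k] k))
      ≤ Submodule.span (MvPowerSeries D k) (Set.range g) by
    exact ⟨Submodule.fg_def.mpr ⟨Set.range g, Set.finite_range g,
      eq_top_iff.mpr hspan⟩⟩
  intro ℓ _hmem
  have hS0 : ∀ x ∈ St12.Ssub k D Δ 0, x = (0 : Δ) := by
    intro x hx
    have := hx (Classical.arbitrary D)
    rwa [pow_zero, one_smul] at this
  let LS : ∀ n : ℕ, {ℓ' : Δ →ₗ[k] k // ∀ x ∈ St12.Ssub k D Δ n, ℓ' x = 0} := fun n =>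
    Nat.rec ⟨ℓ, fun x hx => by rw [hS0 x hx, map_zero]⟩
      (fun n p => ⟨p.1 - ∑ i, (g i).comp (St12.actL (cf n p.1 p.2 i)),
        fun x hx => by
          rw [LinearMap.sub_apply, LinearMap.sum_apply, hc2 n p.1 p.2 x hx, sub_eq_zero]
          exact Finset.sum_congr rfl fun i _ => rfl⟩) n
  set cc : ℕ → Fin r → MvPowerSeries D k := fun n => cf n (LS n).1 (LS n).2 with hccdef
  have hsucc : ∀ n, (LS (n+1)).1
      = (LS n).1 - ∑ i, (g i).comp (St12.actL (cc n i)) := fun n => rfl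
  have htel : ∀ N, (LS N).1
      = ℓ - ∑ n ∈ Finset.range N, ∑ i, (g i).comp (St12.actL (cc n i)) := by
    intro N
    induction N with
    | zero => rw [Finset.range_zero, Finset.sum_empty, sub_zero]; rfl
    | succ N ih => rw [hsucc N, ih, Finset.sum_range_succ]; abel
  have hbound : ∀ n i (γ : D →₀ ℕ),
      MvPowerSeries.coeff γ (cc n i) ≠ 0 → n ≤ ∑ d, γ d := by
    intro n i γ h0
    obtain ⟨d, hd⟩ := hc1 n (LS n).1 (LS n).2 i γ h0
    exact le_trans hd (Finset.single_le_sum (f := fun d => γ d)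
      (fun _ _ => Nat.zero_le _) (Finset.mem_univ d))
  set c : Fin r → MvPowerSeries D k := fun i =>
    (fun γ => ∑ n ∈ Finset.range ((∑ d, γ d) + 1),
      MvPowerSeries.coeff γ (cc n i) : (D →₀ ℕ) → k) with hcdef
  have hcoeffc : ∀ i (γ : D →₀ ℕ), MvPowerSeries.coeff γ (c i)
      = ∑ n ∈ Finset.range ((∑ d, γ d) + 1), MvPowerSeries.coeff γ (cc n i) :=
    fun i γ => rfl
  have hfin : ℓ = ∑ i, c i • g i := by
    apply LinearMap.ext
    intro x
    obtain ⟨N, hxN⟩ := St12.exists_mem_Ssub h1 x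
    have h2' : (LS N).1 x = 0 := (LS N).2 x hxN
    have h4 : (LS N).1 x = ℓ x - ∑ n ∈ Finset.range N, ∑ i, g i (cc n i • x) := by
      rw [htel N, LinearMap.sub_apply, LinearMap.sum_apply]
      congr 1
      refine Finset.sum_congr rfl fun n _ => ?_
      rw [LinearMap.sum_apply]
      exact Finset.sum_congr rfl fun i _ => rfl
    rw [h2'] at h4
    have h3 : ℓ x = ∑ n ∈ Finset.range N, ∑ i, g i (cc n i • x) :=
      sub_eq_zero.mp h4.symm
    have hci : ∀ i, (c i) • x = (∑ n ∈ Finset.range N, cc n i) • x := by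
      intro i
      have hz : (c i - ∑ n ∈ Finset.range N, cc n i) • x = 0 := by
        refine St12.smul_eq_zero_of_support (fun γ hγ => ?_) hxN
        by_contra hne
        push_neg at hne
        apply hγ
        rw [map_sub, map_sum, sub_eq_zero, hcoeffc]
        have hzero : ∀ n, N ≤ n → MvPowerSeries.coeff γ (cc n i) = 0 := by
          intro n hn
          by_contra h0
          obtain ⟨d, hd⟩ := hc1 n (LS n).1 (LS n).2 i γ h0
          exact absurd (le_trans hn hd) (Nat.not_le.mpr (hne d))
        have hzero2 : ∀ n, (∑ d, γ d) + 1 ≤ n → MvPowerSeries.coeff γ (cc n i) = 0 := by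
          intro n hn
          by_contra h0
          have := hbound n i γ h0
          omega
        rw [Finset.sum_subset
            (Finset.range_subset_range.mpr (le_max_left ((∑ d, γ d) + 1) N))
            (fun m _ hm => hzero2 m (by simpa using (Finset.mem_range.not.mp hm))),
          Finset.sum_subset
            (Finset.range_subset_range.mpr (le_max_right ((∑ d, γ d) + 1) N))
            (fun m _ hm => hzero m (by simpa using (Finset.mem_range.not.mp hm)))]
      rw [← sub_eq_zero, ← sub_smul]
      exact hz
    calc ℓ x = ∑ n ∈ Finset.range N, ∑ i, g i (cc n i • x) := h3
      _ = ∑ i, ∑ n ∈ Finset.range N, g i (cc n i • x) := Finset.sum_comm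
      _ = ∑ i, g i ((∑ n ∈ Finset.range N, cc n i) • x) := by
          refine Finset.sum_congr rfl fun i _ => ?_
          rw [Finset.sum_smul, map_sum]
      _ = ∑ i, g i (c i • x) := by
          refine Finset.sum_congr rfl fun i _ => ?_
          rw [hci i]
      _ = (∑ i, c i • g i) x := by
          rw [LinearMap.sum_apply]
          exact Finset.sum_congr rfl fun i _ => rfl
  rw [hfin]
  exact Submodule.sum_mem _ fun i _ =>
    Submodule.smul_mem _ _ (Submodule.subset_span ⟨i, rfl⟩)
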